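/- Let P be a poset such that every element of P lies below some maximal element, every non-empty subset A of P whose opposite is well-ordered has an infimum in P, and every C ∈ Γ(P, mxl(P)) has a maximum element. Then P has the fixed point property (every order-preserving self-map has a fixed point) if and only if Γ(P, mxl(P)) has the fixed point property. -/

import Mathlib

/-- The star of an element: all elements comparable to `a`. -/
def starOf {α : Type*} [PartialOrder α] (a : α) : Set α := {x | x ≤ a ∨ a ≤ x}

/-- The star of a subset: elements comparable to every element of `A`. -/
def starSetOf {α : Type*} [PartialOrder α] (A : Set α) : Set α := ⋂ a ∈ A, starOf a

/-- A subset is astral if it is contained in the star of some element. -/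
def IsAstral {α : Type*} [PartialOrder α] (A : Set α) : Prop := ∃ x : α, A ⊆ starOf x

/-- One step of the comparability relation inside a subposet `S`. -/
def CompStep {α : Type*} [PartialOrder α] (S : Set α) (x y : α) : Prop :=
  x ∈ S ∧ y ∈ S ∧ (x ≤ y ∨ y ≤ x)

/-- `x` and `y` are connected inside the subposet `S`. -/
def ConnIn {α : Type*} [PartialOrder α] (S : Set α) (x y : α) : Prop :=
  Relation.ReflTransGen (CompStep S) x y

/-- A subposet is connected (as a subposet, via comparability). -/
def IsConnSub {α : Type*} [PartialOrder α] (S : Set α) : Prop :=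
  S.Nonempty ∧ ∀ x ∈ S, ∀ y ∈ S, ConnIn S x y

/-- The connected component of `x` in the subposet `S`. -/
def compOf {α : Type*} [PartialOrder α] (S : Set α) (x : α) : Set α :=
  {y | y ∈ S ∧ ConnIn S x y}

/-- `C` is a connected component of the subposet `S`. -/
def IsCompOf {α : Type*} [PartialOrder α] (S C : Set α) : Prop :=
  ∃ x ∈ S, C = compOf S x

/-- The crosscut poset `Γ(P,X)`: connected components of the nonempty `st(A)`, `∅ ≠ A ⊆ X`. -/
def crosscutPoset {α : Type*} [PartialOrder α] (X : Set α) : Set (Set α) :=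
  {C | ∃ A : Set α, A.Nonempty ∧ A ⊆ X ∧ IsCompOf (starSetOf A) C}

/-- The subposet `Γ_f(P,X)` coming from finite subsets `A ⊆ X`. -/
def crosscutPosetF {α : Type*} [PartialOrder α] (X : Set α) : Set (Set α) :=
  {C | ∃ A : Set α, A.Nonempty ∧ A.Finite ∧ A ⊆ X ∧ IsCompOf (starSetOf A) C}

/-- `X` is a cutset: every finite chain extends to a chain by an element of `X`. -/
def IsCutset {α : Type*} [PartialOrder α] (X : Set α) : Prop :=
  ∀ σ : Set α, σ.Finite → IsChain (· ≤ ·) σ → ∃ a ∈ X, IsChain (· ≤ ·) (insert a σ)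

/-- A subset `X` is coherent: every finite nonempty bounded subset of `X` has a meet or a join. -/
def IsCoherent {α : Type*} [PartialOrder α] (X : Set α) : Prop :=
  ∀ A ⊆ X, A.Finite → A.Nonempty → (BddAbove A ∨ BddBelow A) →
    (∃ z, IsGLB A z) ∨ (∃ z, IsLUB A z)

/-- The simplices of the crosscut complex `Γ_C(P,X)`: nonempty finite astral subsets of `X`. -/
def IsCCSimplex {α : Type*} [PartialOrder α] (X σ : Set α) : Prop :=
  σ ⊆ X ∧ σ.Finite ∧ σ.Nonempty ∧ IsAstral σ

/-- `I_X(D) = {x ∈ X | D ⊆ st(x)}`. -/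
def astralIdx {α : Type*} [PartialOrder α] (X D : Set α) : Set α :=
  {x ∈ X | D ⊆ starOf x}

/-- The set of maximal elements of a poset. -/
def mxlSet (α : Type*) [PartialOrder α] : Set α := {a | ∀ b, a ≤ b → b = a}

/-- The set of minimal elements of a poset. -/
def mnlSet (α : Type*) [PartialOrder α] : Set α := {a | ∀ b, b ≤ a → b = a}

/-- Type synonym carrying the Alexandroff topology (down-sets are open) of a preorder. -/
def AlexSp (β : Type*) := β

instance {β : Type*} [Preorder β] : Preorder (AlexSp β) := inferInstanceAs (Preorder β)
instance {β : Type*} [PartialOrder β] : PartialOrder (AlexSp β) :=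
  inferInstanceAs (PartialOrder β)

instance {β : Type*} [Preorder β] : TopologicalSpace (AlexSp β) where
  IsOpen U := IsLowerSet U
  isOpen_univ := isLowerSet_univ
  isOpen_inter _ _ h₁ h₂ := h₁.inter h₂
  isOpen_sUnion _ h := isLowerSet_sUnion h

/-- If every element lies below a maximal element, every nonempty inversely well-ordered
subset has an infimum, and every `C ∈ Γ(P, mxl P)` has a maximum, then `P` has the fixed
point property iff `Γ(P, mxl P)` has it. -/
-- auxiliary development

lemma mem_starSetOf_iff {α : Type*} [PartialOrder α] {A : Set α} (hA : A ⊆ mxlSet α)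
    {x : α} : x ∈ starSetOf A ↔ ∀ a ∈ A, x ≤ a := by
  simp only [starSetOf, Set.mem_iInter, starOf, Set.mem_setOf_eq]
  constructor
  · intro h a ha
    rcases h a ha with h' | h'
    · exact h'
    · exact le_of_eq (hA ha x h')
  · intro h a ha
    exact Or.inl (h a ha)

lemma isLowerSet_starSetOf {α : Type*} [PartialOrder α] {A : Set α} (hA : A ⊆ mxlSet α) :
    IsLowerSet (starSetOf A) := by
  intro a b hba ha
  rw [mem_starSetOf_iff hA] at *
  exact fun c hc => hba.trans (ha c hc)

lemma starSetOf_anti {α : Type*} [PartialOrder α] {A B : Set α} (h : A ⊆ B) :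
    starSetOf B ⊆ starSetOf A := fun x hx =>
  Set.mem_iInter₂.2 fun a ha => Set.mem_iInter₂.1 hx a (h ha)

lemma comp_eq_Iic {α : Type*} [PartialOrder α] {S : Set α} (hS : IsLowerSet S) {w m : α}
    (hm : IsGreatest (compOf S w) m) : compOf S w = Set.Iic m := by
  apply Set.Subset.antisymm
  · exact fun y hy => hm.2 hy
  · intro y (hy : y ≤ m)
    have hmc : m ∈ compOf S w := hm.1
    have hmS : m ∈ S := hmc.1
    have hyS : y ∈ S := hS hy hmS
    exact ⟨hyS, hmc.2.tail ⟨hmS, hyS, Or.inr hy⟩⟩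

lemma crosscut_eq_Iic {α : Type*} [PartialOrder α] {C : Set α}
    (hC : C ∈ crosscutPoset (mxlSet α)) {m : α} (hm : IsGreatest C m) : C = Set.Iic m := by
  obtain ⟨A, hAne, hAsub, w, hw, rfl⟩ := hC
  exact comp_eq_Iic (isLowerSet_starSetOf hAsub) hm

def mxlAbove {α : Type*} [PartialOrder α] (x : α) : Set α := {a | a ∈ mxlSet α ∧ x ≤ a}

lemma mem_star_mxlAbove {α : Type*} [PartialOrder α] {x y : α} (h : y ≤ x) :
    y ∈ starSetOf (mxlAbove x) :=
  (mem_starSetOf_iff (fun _ ha => ha.1)).2 fun _ ha => h.trans ha.2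

lemma comp_mem_crosscut {α : Type*} [PartialOrder α] (hmx : ∀ x : α, ∃ a ∈ mxlSet α, x ≤ a)
    (x : α) : compOf (starSetOf (mxlAbove x)) x ∈ crosscutPoset (mxlSet α) := by
  obtain ⟨a, ha, hxa⟩ := hmx x
  exact ⟨mxlAbove x, ⟨a, ha, hxa⟩, fun a ha => ha.1, x, mem_star_mxlAbove le_rfl, rfl⟩

-- the coinitial inversely well-ordered subchain + lower bound
lemma chain_lower_bound {α : Type*} [PartialOrder α]
    (hinf : ∀ A : Set α, A.Nonempty → IsChain (· ≤ ·) A →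
      A.WellFoundedOn (fun a b => b < a) → ∃ z, IsGLB A z)
    {c : Set α} (hc : IsChain (· ≤ ·) c) (hne : c.Nonempty) :
    ∃ z, IsGLB c z := by
  classical
  set r : α → α → Prop := WellOrderingRel with hr
  have hwf : WellFounded r := IsWellFounded.wf
  set D : Set α := {d | d ∈ c ∧ ∀ d' ∈ c, r d' d → d < d'} with hD
  have hDsub : D ⊆ c := fun d hd => hd.1
  -- D is coinitial in c
  have hcoin : ∀ x ∈ c, ∃ d ∈ D, d ≤ x := by
    intro x hx
    set s : Set α := {y | y ∈ c ∧ y ≤ x} with hs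
    have hsne : s.Nonempty := ⟨x, hx, le_rfl⟩
    refine ⟨hwf.min s hsne, ⟨(hwf.min_mem s hsne).1, ?_⟩, (hwf.min_mem s hsne).2⟩
    intro d' hd' hrd'
    have hdm := hwf.min_mem s hsne
    have hns : d' ∉ s := fun hmem => hwf.not_lt_min s hmem hrd'
    have hne' : ¬ d' ≤ x := fun hle => hns ⟨hd', hle⟩
    have hdx : hwf.min s hsne ≤ x := hdm.2
    rcases hc.total hdm.1 hd' with h | h
    · exact lt_of_le_of_ne h (fun he => hne' (he ▸ hdx))
    · exact absurd (h.trans hdx) hne'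
  have hDne : D.Nonempty := by
    obtain ⟨x, hx⟩ := hne
    obtain ⟨d, hd, _⟩ := hcoin x hx
    exact ⟨d, hd⟩
  have hDchain : IsChain (· ≤ ·) D := hc.mono hDsub
  have hDwf : D.WellFoundedOn (fun a b => b < a) := by
    have : WellFounded (fun a b : D => r a b) := InvImage.wf Subtype.val hwf
    exact Subrelation.wf (fun {a b} (hab : (b : α) < (a : α)) => by
      rcases trichotomous_of r (a : α) b with h | h | h
      · exact h
      · exact absurd h (by intro he; rw [he] at hab; exact lt_irrefl _ hab)
      · exact absurd (a.2.2 b b.2.1 h) (not_lt_of_gt hab)) this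
  obtain ⟨z, hz⟩ := hinf D hDne hDchain hDwf
  refine ⟨z, ⟨fun x hx => ?_, fun w hw => hz.2 (fun d hd => hw (hDsub hd))⟩⟩
  obtain ⟨d, hd, hdx⟩ := hcoin x hx
  exact (hz.1 hd).trans hdx

-- Abian–Brown
lemma abian_brown {α : Type*} [PartialOrder α]
    (hinf : ∀ A : Set α, A.Nonempty → IsChain (· ≤ ·) A →
      A.WellFoundedOn (fun a b => b < a) → ∃ z, IsGLB A z)
    {f : α → α} (hf : Monotone f) {m : α} (hm : f m ≤ m) : ∃ x, f x = x := by
  classical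
  set T : Set α := {x | f x ≤ x} with hT
  have hmT : m ∈ T := hm
  -- use Zorn in the dual order for a minimal element of T
  obtain ⟨z, hzm, hz⟩ := zorn_le_nonempty₀ (α := αᵒᵈ) (OrderDual.ofDual ⁻¹' T)
    (fun c hcs hchain y hyc => by
      have hc' : IsChain (· ≤ ·) (OrderDual.ofDual '' c) := by
        rintro _ ⟨p, hp, rfl⟩ _ ⟨q, hq, rfl⟩ hpq
        exact (hchain hp hq (fun h => hpq (congrArg _ h))).symm
      obtain ⟨w, hw⟩ := chain_lower_bound hinf hc' ⟨y, y, hyc, rfl⟩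
      refine ⟨OrderDual.toDual w, ?_, fun x hx => hw.1 ⟨x, hx, rfl⟩⟩
      have hfw : f w ≤ w := hw.2 (fun d hd => by
        obtain ⟨p, hp, rfl⟩ := hd
        exact (hf (hw.1 ⟨p, hp, rfl⟩)).trans (hcs hp))
      exact hfw) m hmT
  refine ⟨z, le_antisymm ?_ ?_⟩
  · exact hz.1
  · have hfz : f z ∈ T := hf hz.1
    have := hz.2 (y := OrderDual.toDual (f z)) hfz hz.1
    exact this

theorem stmt_13 {α : Type*} [PartialOrder α]
    (hmx : ∀ x : α, ∃ a ∈ mxlSet α, x ≤ a)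
    (hinf : ∀ A : Set α, A.Nonempty → IsChain (· ≤ ·) A →
      A.WellFoundedOn (fun a b => b < a) → ∃ z, IsGLB A z)
    (hmax : ∀ C ∈ crosscutPoset (mxlSet α), ∃ m, IsGreatest C m) :
    (∀ f : α → α, Monotone f → ∃ x, f x = x) ↔
      (∀ g : {C // C ∈ crosscutPoset (mxlSet α)} → {C // C ∈ crosscutPoset (mxlSet α)},
        Monotone g → ∃ C, g C = C) := by
  classical
  choose mOf hmOf using hmax
  let r : α → α := fun x => mOf _ (comp_mem_crosscut hmx x)
  have hr : ∀ x, IsGreatest (compOf (starSetOf (mxlAbove x)) x) (r x) :=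
    fun x => hmOf _ (comp_mem_crosscut hmx x)
  have hxr : ∀ x, x ≤ r x :=
    fun x => (hr x).2 ⟨mem_star_mxlAbove le_rfl, Relation.ReflTransGen.refl⟩
  have hIic : ∀ x, compOf (starSetOf (mxlAbove x)) x = Set.Iic (r x) :=
    fun x => crosscut_eq_Iic (comp_mem_crosscut hmx x) (hr x)
  have hrstar : ∀ x, r x ∈ starSetOf (mxlAbove x) := fun x => (hr x).1.1
  have hrmono : Monotone r := by
    intro x y hxy
    have hsub : mxlAbove y ⊆ mxlAbove x := fun a ha => ⟨ha.1, hxy.trans ha.2⟩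
    have h1 : r x ∈ starSetOf (mxlAbove y) := starSetOf_anti hsub (hrstar x)
    have hx' : x ∈ starSetOf (mxlAbove y) := mem_star_mxlAbove hxy
    have hy' : y ∈ starSetOf (mxlAbove y) := mem_star_mxlAbove le_rfl
    have hmem : r x ∈ compOf (starSetOf (mxlAbove y)) y :=
      ⟨h1, Relation.ReflTransGen.head ⟨hy', hx', Or.inr hxy⟩
        (Relation.ReflTransGen.single ⟨hx', h1, Or.inl (hxr x)⟩)⟩
    exact (hr y).2 hmem
  have hridem : ∀ {C : Set α}, C ∈ crosscutPoset (mxlSet α) →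
      ∀ {m' : α}, IsGreatest C m' → r m' = m' := by
    intro C hC m' hm'
    obtain ⟨B, hBne, hBsub, w, hw, rfl⟩ := hC
    have hm'S : m' ∈ starSetOf B := hm'.1.1
    have hBsub' : B ⊆ mxlAbove m' := fun a ha => ⟨hBsub ha, (mem_starSetOf_iff hBsub).1 hm'S a ha⟩
    have h1 : r m' ∈ starSetOf B := starSetOf_anti hBsub' (hrstar m')
    have h2 : r m' ∈ compOf (starSetOf B) w :=
      ⟨h1, hm'.1.2.tail ⟨hm'S, h1, Or.inl (hxr m')⟩⟩
    exact le_antisymm (hm'.2 h2) (hxr m')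
  let Φ : α → {C // C ∈ crosscutPoset (mxlSet α)} :=
    fun x => ⟨compOf (starSetOf (mxlAbove x)) x, comp_mem_crosscut hmx x⟩
  have hΦmono : Monotone Φ := by
    intro x y hxy
    show compOf (starSetOf (mxlAbove x)) x ≤ compOf (starSetOf (mxlAbove y)) y
    rw [hIic x, hIic y]
    exact Set.Iic_subset_Iic.2 (hrmono hxy)
  constructor
  · intro hP g hg
    let f : α → α := fun x => mOf (g (Φ x)).1 (g (Φ x)).2
    have hfg : ∀ x, IsGreatest (g (Φ x)).1 (f x) := fun x => hmOf _ _
    have hfmono : Monotone f := by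
      intro x y hxy
      have h := hg (hΦmono hxy)
      exact (hfg y).2 (h (hfg x).1)
    obtain ⟨x, hx⟩ := hP f hfmono
    have hgx : IsGreatest (g (Φ x)).1 x := by
      have h := hfg x
      rw [hx] at h
      exact h
    have hrx : r x = x := hridem (g (Φ x)).2 hgx
    refine ⟨Φ x, ?_⟩
    apply Subtype.ext
    rw [crosscut_eq_Iic (g (Φ x)).2 hgx]
    show Set.Iic x = compOf (starSetOf (mxlAbove x)) x
    rw [hIic x, hrx]
  · intro hΓ f hf
    let g : {C // C ∈ crosscutPoset (mxlSet α)} → {C // C ∈ crosscutPoset (mxlSet α)} :=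
      fun C => Φ (f (mOf C.1 C.2))
    have hgmono : Monotone g := by
      intro C C' hCC'
      have h1 : mOf C.1 C.2 ≤ mOf C'.1 C'.2 := (hmOf C'.1 C'.2).2 (hCC' (hmOf C.1 C.2).1)
      exact hΦmono (hf h1)
    obtain ⟨C, hC⟩ := hΓ g hgmono
    have h2 : IsGreatest C.1 (mOf C.1 C.2) := hmOf C.1 C.2
    have h3 : IsGreatest C.1 (r (f (mOf C.1 C.2))) := by
      have hv : compOf (starSetOf (mxlAbove (f (mOf C.1 C.2)))) (f (mOf C.1 C.2)) = (C : Set α) :=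
        congrArg Subtype.val hC
      have h3' := hr (f (mOf C.1 C.2))
      rw [hv] at h3'
      exact h3'
    have h4 : mOf C.1 C.2 = r (f (mOf C.1 C.2)) := h2.unique h3
    exact abian_brown hinf hf ((hxr (f (mOf C.1 C.2))).trans h4.ge)
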